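/- Let C be a cocomplete category and C' a full subcategory such that every object of C' is compact in C, and suppose there is a functor δ : C ⥤ Ind(C') with colim ∘ δ naturally isomorphic to the identity of C, where colim : Ind(C') ⥤ C takes colimits in C. Then δ and colim form an equivalence of categories between C and Ind(C'). -/

import Mathlib

open CategoryTheory CategoryTheory.Limits Opposite

universe v u

section Aux

lemma aux_isIso_app {D : Type*} [Category D] {E : Type*} [Category E] {F G : D ⥤ E} (α : F ⟶ G)
    {I : Type*} [Category I] (H : I ⥤ D) [HasColimit H]
    [HasColimit (H ⋙ F)] [HasColimit (H ⋙ G)]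
    [PreservesColimit H F] [PreservesColimit H G]
    (hα : ∀ i, IsIso (α.app (H.obj i))) {X : D} (e : colimit H ≅ X) :
    IsIso (α.app X) := by
  have h1 : α.app (colimit H) =
      (preservesColimitIso F H).hom ≫ colimMap (Functor.whiskerLeft H α) ≫
        (preservesColimitIso G H).inv := by
    rw [← Iso.inv_comp_eq]
    ext j
    simp
  have h2 : IsIso (Functor.whiskerLeft H α) := by
    have : ∀ i, IsIso ((Functor.whiskerLeft H α).app i) := hα
    exact NatIso.isIso_of_isIso_app _
  have h3 : IsIso (colimMap (Functor.whiskerLeft H α)) :=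
    ⟨colimMap (inv (Functor.whiskerLeft H α)), by ext; simp, by ext; simp⟩
  have h4 : IsIso (α.app (colimit H)) := by rw [h1]; infer_instance
  have h5 : α.app X = inv (F.map e.hom) ≫ α.app (colimit H) ≫ G.map e.hom := by
    rw [IsIso.eq_inv_comp, α.naturality]
  rw [h5]; infer_instance

variable {D : Type u} [Category.{v} D]

/-- Hom from a yoneda object in `Ind D` is given by evaluating the underlying presheaf. -/
noncomputable def indYonedaHomEquiv (c : D) (Y : Ind D) :
    (Ind.yoneda.obj c ⟶ Y) ≃ ((Ind.inclusion D).obj Y).obj (op c) :=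
  Ind.inclusion.fullyFaithful.homEquiv.trans
    ((Iso.homCongr (Ind.yonedaCompInclusion.app c) (Iso.refl _)).trans yonedaEquiv)

noncomputable def indCoyonedaIso (c : D) :
    coyoneda.obj (op (Ind.yoneda.obj c)) ≅
      Ind.inclusion D ⋙ (evaluation Dᵒᵖ (Type v)).obj (op c) :=
  NatIso.ofComponents (fun Y => Equiv.toIso (indYonedaHomEquiv c Y)) (by
    intro Y Z g
    ext f
    simp [indYonedaHomEquiv, yonedaEquiv_comp])

lemma preservesColimitsOfShape_indCoyoneda (c : D)
    (I : Type v) [SmallCategory I] [IsFiltered I] :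
    PreservesColimitsOfShape I (coyoneda.obj (op (Ind.yoneda.obj c)) : Ind D ⥤ Type v) :=
  preservesColimitsOfShape_of_natIso (indCoyonedaIso c).symm

end Aux

/-- Let `C` be a cocomplete category and `C'` a full subcategory (given by a predicate `P` on
objects) such that every object of `C'` is compact in `C` (i.e. its covariant hom-functor
preserves filtered colimits).  Suppose `colim : Ind C' ⥤ C` is the functor taking colimits in
`C` (characterized by: it restricts to the inclusion on `C'` and preserves filtered colimits),
and `δ : C ⥤ Ind C'` is a functor with `δ ⋙ colim` naturally isomorphic to the identity of
`C`.  Then `δ` and `colim` form an equivalence of categories between `C` and `Ind C'`. -/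
theorem stmt_4 {C : Type u} [Category.{v} C] [HasColimits C] (P : C → Prop)
    (hcompact : ∀ c : ObjectProperty.FullSubcategory P,
      Nonempty (PreservesFilteredColimits (coyoneda.obj (op c.obj))))
    (colim : Ind (ObjectProperty.FullSubcategory P) ⥤ C)
    (hrestrict : Ind.yoneda ⋙ colim ≅ ObjectProperty.ι P)
    (hpres : Nonempty (PreservesFilteredColimits colim))
    (δ : C ⥤ Ind (ObjectProperty.FullSubcategory P))
    (hδ : δ ⋙ colim ≅ 𝟭 C) :
    Nonempty (colim ⋙ δ ≅ 𝟭 (Ind (ObjectProperty.FullSubcategory P))) := by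
  have _i1 : PreservesFilteredColimits colim := hpres.some
  -- the comparison natural transformation
  let α : ∀ c : ObjectProperty.FullSubcategory P,
      (coyoneda.obj (op (Ind.yoneda.obj c)) ⟶ colim ⋙ coyoneda.obj (op c.obj)) := fun c =>
    { app := fun Y => TypeCat.ofHom (fun f => hrestrict.inv.app c ≫ colim.map f)
      naturality := fun Y Z g => by ext f; simp }
  have keyY : ∀ (c d : ObjectProperty.FullSubcategory P), IsIso ((α c).app (Ind.yoneda.obj d)) := by
    intro c d
    have hval : ∀ f : c ⟶ d, (α c).app (Ind.yoneda.obj d) (Ind.yoneda.map f)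
        = (ObjectProperty.ι P).map f ≫ hrestrict.inv.app d := by
      intro f
      show hrestrict.inv.app c ≫ colim.map (Ind.yoneda.map f) = _
      have h2 := hrestrict.inv.naturality f
      simp only [Functor.comp_map] at h2
      rw [← h2]
    rw [isIso_iff_bijective]
    constructor
    · intro f g hfg
      obtain ⟨f', rfl⟩ := Ind.yoneda.map_surjective f
      obtain ⟨g', rfl⟩ := Ind.yoneda.map_surjective g
      rw [hval, hval] at hfg
      have : f' = g' := by
        apply (ObjectProperty.ι P).map_injective
        rwa [cancel_mono] at hfg
      rw [this]
    · intro h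
      refine ⟨Ind.yoneda.map
        (ObjectProperty.homMk (show _ ⟶ (ObjectProperty.ι P).obj d from
          h ≫ hrestrict.hom.app d)), ?_⟩
      rw [hval]
      simp
  have key : ∀ (c : ObjectProperty.FullSubcategory P) (Y : Ind (ObjectProperty.FullSubcategory P)),
      IsIso ((α c).app Y) := by
    intro c Y
    have := (hcompact c).some
    have := preservesColimitsOfShape_indCoyoneda c Y.presentation.I
    exact aux_isIso_app (α c) (Y.presentation.F ⋙ Ind.yoneda)
      (fun i => keyY c _) (Ind.colimitPresentationCompYoneda Y)
  -- value of `α` on a composition with a yoneda map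
  have hcomp : ∀ {c d : ObjectProperty.FullSubcategory P} (u : c ⟶ d) {Y : Ind (ObjectProperty.FullSubcategory P)}
      (t : Ind.yoneda.obj d ⟶ Y),
      (α c).app Y (Ind.yoneda.map u ≫ t)
        = (ObjectProperty.ι P).map u ≫ (α d).app Y t := by
    intro c d u Y t
    show hrestrict.inv.app c ≫ colim.map (Ind.yoneda.map u ≫ t)
      = (ObjectProperty.ι P).map u ≫ hrestrict.inv.app d ≫ colim.map t
    rw [Functor.map_comp, ← Category.assoc, ← Category.assoc]
    congr 1
    have h2 := hrestrict.inv.naturality u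
    simp only [Functor.comp_map] at h2
    rw [← h2]
  -- `colim.map` in terms of `α`
  have hcolimmap : ∀ (c : ObjectProperty.FullSubcategory P) {Y : Ind (ObjectProperty.FullSubcategory P)}
      (g : Ind.yoneda.obj c ⟶ Y),
      colim.map g = hrestrict.hom.app c ≫ (α c).app Y g := by
    intro c Y g
    show colim.map g = hrestrict.hom.app c ≫ hrestrict.inv.app c ≫ colim.map g
    simp
  have hfaith : colim.Faithful := by
    refine ⟨fun {X Y} f g hfg => ?_⟩
    rw [← cancel_epi (Ind.colimitPresentationCompYoneda X).hom]
    apply colimit.hom_ext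
    intro j
    have hinj := ((isIso_iff_bijective _).1 (key (X.presentation.F.obj j) Y)).1
    apply hinj
    show hrestrict.inv.app _ ≫ colim.map (colimit.ι (X.presentation.F ⋙ Ind.yoneda) j ≫
        (Ind.colimitPresentationCompYoneda X).hom ≫ f) = hrestrict.inv.app _ ≫
      colim.map (colimit.ι (X.presentation.F ⋙ Ind.yoneda) j ≫
        (Ind.colimitPresentationCompYoneda X).hom ≫ g)
    simp only [Functor.map_comp, hfg]
  have hfull : colim.Full := by
    refine ⟨fun {X Y} h => ?_⟩
    set H := X.presentation.F ⋙ Ind.yoneda with hH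
    set e := Ind.colimitPresentationCompYoneda X with he
    let eA : ∀ (c : ObjectProperty.FullSubcategory P) (Z : Ind (ObjectProperty.FullSubcategory P)),
        (Ind.yoneda.obj c ⟶ Z) ≃ (c.obj ⟶ colim.obj Z) := fun c Z =>
      Equiv.ofBijective _ ((isIso_iff_bijective _).1 (key c Z))
    have hAsymm : ∀ (c : ObjectProperty.FullSubcategory P) (Z : Ind (ObjectProperty.FullSubcategory P))
        (x : c.obj ⟶ colim.obj Z), (α c).app Z ((eA c Z).symm x) = x :=
      fun c Z x => (eA c Z).apply_symm_apply x
    let s : Cocone H :=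
      { pt := Y
        ι :=
          { app := fun i => (eA (X.presentation.F.obj i) Y).symm
              (hrestrict.inv.app (X.presentation.F.obj i) ≫
                colim.map (colimit.ι H i ≫ e.hom) ≫ h)
            naturality := fun i j φ => by
              have hid : ∀ t : Ind.yoneda.obj (X.presentation.F.obj i) ⟶ Y,
                  (H.map φ ≫ (eA (X.presentation.F.obj j) Y).symm
                    (hrestrict.inv.app (X.presentation.F.obj j) ≫
                      colim.map (colimit.ι H j ≫ e.hom) ≫ h) = t) →
                  H.map φ ≫ (eA (X.presentation.F.obj j) Y).symm
                    (hrestrict.inv.app (X.presentation.F.obj j) ≫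
                      colim.map (colimit.ι H j ≫ e.hom) ≫ h) = t ≫ 𝟙 Y := by
                intro t ht; rw [Category.comp_id]; exact ht
              apply hid
              apply (eA (X.presentation.F.obj i) Y).injective
              show (α (X.presentation.F.obj i)).app Y
                  (Ind.yoneda.map (X.presentation.F.map φ) ≫
                    (eA (X.presentation.F.obj j) Y).symm
                      (hrestrict.inv.app (X.presentation.F.obj j) ≫
                        colim.map (colimit.ι H j ≫ e.hom) ≫ h))
                = (α (X.presentation.F.obj i)).app Y
                    ((eA (X.presentation.F.obj i) Y).symm
                      (hrestrict.inv.app (X.presentation.F.obj i) ≫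
                        colim.map (colimit.ι H i ≫ e.hom) ≫ h))
              rw [hcomp, hAsymm, hAsymm]
              -- now a computation in `C`
              have h3 := hrestrict.inv.naturality (X.presentation.F.map φ)
              simp only [Functor.comp_map] at h3
              rw [← Category.assoc, h3, Category.assoc, ← Functor.map_comp_assoc]
              rw [show Ind.yoneda.map (X.presentation.F.map φ) ≫ colimit.ι H j ≫ e.hom
                = colimit.ι H i ≫ e.hom from by
                  rw [← Category.assoc]
                  congr 1
                  exact colimit.w H φ] } }
    refine ⟨e.inv ≫ colimit.desc H s, ?_⟩
    have hc := isColimitOfPreserves colim (colimit.isColimit H)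
    have heq : colim.map e.hom ≫ colim.map (e.inv ≫ colimit.desc H s)
        = colim.map e.hom ≫ h := by
      refine hc.hom_ext fun j => ?_
      show colim.map (colimit.ι H j) ≫ colim.map e.hom ≫ colim.map (e.inv ≫ colimit.desc H s)
        = colim.map (colimit.ι H j) ≫ colim.map e.hom ≫ h
      rw [← Functor.map_comp_assoc, ← Functor.map_comp]
      simp only [Category.assoc, Iso.hom_inv_id_assoc, colimit.ι_desc]
      show colim.map ((eA (X.presentation.F.obj j) Y).symm
        (hrestrict.inv.app (X.presentation.F.obj j) ≫
          colim.map (colimit.ι H j ≫ e.hom) ≫ h)) = _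
      rw [hcolimmap, hAsymm]
      simp
    rwa [cancel_epi (colim.map e.hom)] at heq
  exact ⟨Functor.fullyFaithfulCancelRight colim
    ((Functor.associator _ _ _) ≪≫ Functor.isoWhiskerLeft colim hδ ≪≫
      Functor.rightUnitor colim ≪≫ (Functor.leftUnitor colim).symm)⟩
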